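/- For every integer k ≥ 2, the formal power series R_k(z) = Σ_{n≥1} R_n·z^n with rational (indeed natural number) coefficients satisfies the identity 2z·R_k(z)² − r_k(z)·R_k(z) + z·s_k(z) = 0, where r_k(z) = 1 − z + 2·C_k·z^{2k+1} and s_k(z) = 1 + k + C_k²·z^{4k}. -/

import Mathlib

open Filter Set

/-- Regular expressions over an alphabet `A` (grammar β := ε | σ | β+β | β·β | β⋆). -/
inductive RegEx (A : Type) : Type where
  | eps : RegEx A
  | char (a : A) : RegEx A
  | plus (l r : RegEx A) : RegEx A
  | cat (l r : RegEx A) : RegEx A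
  | star (e : RegEx A) : RegEx A

namespace RegEx

/-- The (tree-)size of an expression: number of symbols / syntax-tree nodes. -/
def size {A : Type} : RegEx A → ℕ
  | eps => 1
  | char _ => 1
  | plus l r => size l + size r + 1
  | cat l r => size l + size r + 1
  | star e => size e + 1

/-- The number of letter occurrences (alphabetic size). -/
def letters {A : Type} : RegEx A → ℕ
  | eps => 0
  | char _ => 1
  | plus l r => letters l + letters r
  | cat l r => letters l + letters r
  | star e => letters e

/-- `IsUnionOfLetters e l` : `e` is a binary union tree whose leaves are single letters,
read from left to right giving the list `l`. -/
inductive IsUnionOfLetters {A : Type} : RegEx A → List A → Prop where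
  | char (a : A) : IsUnionOfLetters (char a) [a]
  | plus {l r : RegEx A} {ll rl : List A} :
      IsUnionOfLetters l ll → IsUnionOfLetters r rl →
      IsUnionOfLetters (plus l r) (ll ++ rl)

/-- `e` is of the form `(σ_{i₁}+⋯+σ_{i_k})⋆` where `σ_{i₁},…,σ_{i_k}` is a permutation of
the (finite) alphabet `A`. -/
def IsSigmaStar {A : Type} [Fintype A] (e : RegEx A) : Prop :=
  ∃ (f : RegEx A) (l : List A),
    e = star f ∧ IsUnionOfLetters f l ∧ l.Nodup ∧ ∀ a : A, a ∈ l

/-- The absorbing pattern `Σ⋆` does not occur in `e` as an argument of a union. -/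
def Avoids {A : Type} [Fintype A] : RegEx A → Prop
  | eps => True
  | char _ => True
  | plus l r => Avoids l ∧ Avoids r ∧ ¬ IsSigmaStar l ∧ ¬ IsSigmaStar r
  | cat l r => Avoids l ∧ Avoids r
  | star e => Avoids e

end RegEx

namespace S11
open RegEx

variable {A : Type}

lemma size_pos (e : RegEx A) : 1 ≤ e.size := by
  cases e <;> simp [RegEx.size]

lemma finite_size_le [Finite A] (n : ℕ) : {e : RegEx A | e.size ≤ n}.Finite := by
  induction n with
  | zero =>
    convert Set.finite_empty
    ext e; simpa using by have := size_pos e; omega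
  | succ n ih =>
    have hsub : {e : RegEx A | e.size ≤ n + 1} ⊆
        {RegEx.eps} ∪ (Set.range RegEx.char)
        ∪ (Set.image2 RegEx.plus {e | e.size ≤ n} {e | e.size ≤ n})
        ∪ (Set.image2 RegEx.cat {e | e.size ≤ n} {e | e.size ≤ n})
        ∪ (RegEx.star '' {e | e.size ≤ n}) := by
      intro e he
      cases e with
      | eps => left; left; left; left; rfl
      | char a => left; left; left; right; exact ⟨a, rfl⟩
      | plus l r =>
        simp only [RegEx.size, Set.mem_setOf_eq] at he
        left; left; right; exact ⟨l, by simp; omega, r, by simp; omega, rfl⟩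
      | cat l r =>
        simp only [RegEx.size, Set.mem_setOf_eq] at he
        left; right; exact ⟨l, by simp; omega, r, by simp; omega, rfl⟩
      | star f =>
        simp only [RegEx.size, Set.mem_setOf_eq] at he
        right; exact ⟨f, by simp; omega, rfl⟩
    exact Set.Finite.subset
      (((((Set.finite_singleton _).union (Set.finite_range _)).union
        (ih.image2 _ ih)).union (ih.image2 _ ih)).union (ih.image _))
      hsub

lemma finite_subtype_size [Finite A] (P : RegEx A → Prop) (n : ℕ)
    (h : ∀ e, P e → e.size ≤ n) : Finite {e : RegEx A // P e} := by
  have : Set.Finite {e : RegEx A | P e} :=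
    (finite_size_le n).subset (fun e he => h e he)
  exact this

lemma iul_ne_nil {f : RegEx A} {l : List A} (h : IsUnionOfLetters f l) : l ≠ [] := by
  induction h with
  | char a => simp
  | plus h1 h2 ih1 ih2 => simp [ih1]

lemma iul_unique {f : RegEx A} {l1 l2 : List A} (h1 : IsUnionOfLetters f l1)
    (h2 : IsUnionOfLetters f l2) : l1 = l2 := by
  induction h1 generalizing l2 with
  | char a => cases h2; rfl
  | plus ha hb iha ihb =>
    cases h2 with
    | plus ha' hb' => rw [iha ha', ihb hb']

lemma iul_size {f : RegEx A} {l : List A} (h : IsUnionOfLetters f l) :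
    f.size + 1 = 2 * l.length := by
  induction h with
  | char a => rfl
  | plus h1 h2 ih1 ih2 => simp only [RegEx.size, List.length_append] at *; omega

lemma iul_not_sigmaStar [Fintype A] {f : RegEx A} {l : List A}
    (h : IsUnionOfLetters f l) : ¬ IsSigmaStar f := by
  rintro ⟨g, l', hf, -⟩
  subst hf; cases h

lemma iul_avoids [Fintype A] {f : RegEx A} {l : List A} (h : IsUnionOfLetters f l) :
    Avoids f := by
  induction h with
  | char a => trivial
  | plus h1 h2 ih1 ih2 => exact ⟨ih1, ih2, iul_not_sigmaStar h1, iul_not_sigmaStar h2⟩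

lemma sigmaStar_avoids [Fintype A] {e : RegEx A} (h : IsSigmaStar e) : Avoids e := by
  obtain ⟨f, l, rfl, hf, -⟩ := h
  show Avoids f
  exact iul_avoids hf

lemma sigmaStar_size [Fintype A] {e : RegEx A} (h : IsSigmaStar e) :
    e.size = 2 * Fintype.card A := by
  classical
  obtain ⟨f, l, rfl, hf, hnd, hall⟩ := h
  have htf : l.toFinset = Finset.univ := by ext a; simp [hall a]
  have hlen : l.length = Fintype.card A := by
    rw [← List.toFinset_card_of_nodup hnd, htf, Finset.card_univ]
  have hs := iul_size hf
  show f.size + 1 = 2 * Fintype.card A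
  omega

lemma nat_card_sigma {ι : Type} [Fintype ι] (f : ι → Type) [∀ i, Finite (f i)] :
    Nat.card (Σ i, f i) = ∑ i, Nat.card (f i) := by
  classical
  letI : ∀ i, Fintype (f i) := fun i => Fintype.ofFinite _
  simp [Nat.card_eq_fintype_card]

instance finite_iul [Finite A] (l : List A) :
    Finite {f : RegEx A // IsUnionOfLetters f l} :=
  finite_subtype_size _ (2 * l.length) (fun f hf => by have := iul_size hf; omega)

lemma iul_length_one {f : RegEx A} {l : List A} (h : IsUnionOfLetters f l)
    (hl : l.length = 1) : ∃ a, f = RegEx.char a ∧ l = [a] := by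
  cases h with
  | char a => exact ⟨a, rfl, rfl⟩
  | plus h1 h2 =>
    exfalso
    have h1' := List.length_pos_of_ne_nil (iul_ne_nil h1)
    have h2' := List.length_pos_of_ne_nil (iul_ne_nil h2)
    simp [List.length_append] at hl
    omega


def unionGlue (l : List A) (m' : ℕ)
    (x : Σ i : Fin (m' + 1), {f : RegEx A // IsUnionOfLetters f (l.take ((i : ℕ) + 1))} ×
        {f : RegEx A // IsUnionOfLetters f (l.drop ((i : ℕ) + 1))}) :
    {f : RegEx A // IsUnionOfLetters f l} :=
  ⟨RegEx.plus x.2.1.1 x.2.2.1, by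
    have h := IsUnionOfLetters.plus x.2.1.2 x.2.2.2
    rwa [List.take_append_drop] at h⟩

lemma unionGlue_bijective (l : List A) (m' : ℕ) (hlen : l.length = m' + 2) :
    Function.Bijective (unionGlue l m') := by
  constructor
  · rintro ⟨i, ⟨f1, h1⟩, ⟨f2, h2⟩⟩ ⟨j, ⟨g1, k1⟩, ⟨g2, k2⟩⟩ heq
    have hp : RegEx.plus f1 f2 = RegEx.plus g1 g2 := congrArg Subtype.val heq
    injection hp with e1 e2
    subst e1; subst e2
    have hij : i = j := by
      have ht := iul_unique h1 k1
      have hlt := congrArg List.length ht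
      have hi := i.isLt
      have hj := j.isLt
      simp only [List.length_take] at hlt
      exact Fin.ext (by omega)
    subst hij
    rfl
  · rintro ⟨f, hf⟩
    cases hf with
    | char a => simp at hlen
    | @plus fl fr ll rl h1 h2 =>
      have hl1 := List.length_pos_of_ne_nil (iul_ne_nil h1)
      have hl2 := List.length_pos_of_ne_nil (iul_ne_nil h2)
      have hlen' : ll.length + rl.length = m' + 2 := by simpa using hlen
      refine ⟨⟨⟨ll.length - 1, by omega⟩, ⟨fl, ?_⟩, ⟨fr, ?_⟩⟩, rfl⟩
      · show IsUnionOfLetters fl ((ll ++ rl).take (ll.length - 1 + 1))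
        rwa [Nat.sub_add_cancel hl1, List.take_left]
      · show IsUnionOfLetters fr ((ll ++ rl).drop (ll.length - 1 + 1))
        rwa [Nat.sub_add_cancel hl1, List.drop_left]

lemma card_iul_step [Finite A] (l : List A) (m' : ℕ) (hlen : l.length = m' + 2) :
    Nat.card {f : RegEx A // IsUnionOfLetters f l}
      = ∑ i : Fin (m' + 1),
          Nat.card {f : RegEx A // IsUnionOfLetters f (l.take ((i : ℕ) + 1))} *
          Nat.card {f : RegEx A // IsUnionOfLetters f (l.drop ((i : ℕ) + 1))} := by
  rw [← Nat.card_congr (Equiv.ofBijective _ (unionGlue_bijective l m' hlen)),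
    nat_card_sigma]
  exact Finset.sum_congr rfl (fun i _ => Nat.card_prod _ _)

lemma card_iul [Finite A] (m : ℕ) : ∀ (l : List A), l.length = m → l ≠ [] →
    Nat.card {f : RegEx A // IsUnionOfLetters f l} = catalan (m - 1) := by
  induction m using Nat.strong_induction_on with
  | _ m ih =>
  intro l hlen hne
  rcases Nat.lt_or_ge m 2 with hm | hm
  · -- m = 1
    have hm1 : m = 1 := by
      have := List.length_pos_of_ne_nil hne; omega
    subst hm1
    obtain ⟨a, ha⟩ : ∃ a, l = [a] := by
      cases l with
      | nil => simp at hne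
      | cons a t =>
        cases t with
        | nil => exact ⟨a, rfl⟩
        | cons b t' => simp at hlen
    subst ha
    rw [show catalan (1 - 1) = 1 by norm_num, Nat.card_eq_one_iff_unique]
    refine ⟨⟨?_⟩, ⟨⟨RegEx.char a, IsUnionOfLetters.char a⟩⟩⟩
    rintro ⟨f, hf⟩ ⟨g, hg⟩
    obtain ⟨a1, rfl, hl1⟩ := iul_length_one hf rfl
    obtain ⟨a2, rfl, hl2⟩ := iul_length_one hg rfl
    simp_all
  · -- m ≥ 2
    obtain ⟨m', rfl⟩ : ∃ m', m = m' + 2 := ⟨m - 2, by omega⟩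
    rw [card_iul_step l m' hlen]
    have hterm : ∀ i : Fin (m' + 1),
        Nat.card {f : RegEx A // IsUnionOfLetters f (l.take ((i : ℕ) + 1))} *
        Nat.card {f : RegEx A // IsUnionOfLetters f (l.drop ((i : ℕ) + 1))}
        = catalan i * catalan (m' - i) := by
      intro i
      have hi := i.isLt
      have ht : (l.take ((i : ℕ) + 1)).length = (i : ℕ) + 1 := by
        simp only [List.length_take]; omega
      have hd : (l.drop ((i : ℕ) + 1)).length = m' + 1 - (i : ℕ) := by
        simp only [List.length_drop]; omega
      have htn : l.take ((i : ℕ) + 1) ≠ [] := by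
        intro h0; rw [h0] at ht; simp at ht
      have hdn : l.drop ((i : ℕ) + 1) ≠ [] := by
        intro h0; rw [h0] at hd; simp at hd; omega
      have e2 : m' + 1 - (i : ℕ) - 1 = m' - (i : ℕ) := by omega
      rw [ih _ (by omega) _ ht htn, ih _ (by omega) _ hd hdn, Nat.add_sub_cancel, e2]
    rw [Fintype.sum_congr _ _ hterm]
    have : m' + 2 - 1 = m' + 1 := rfl
    rw [this, catalan_succ]


lemma complete_list_length [Fintype A] {l : List A} (hnd : l.Nodup)
    (hall : ∀ a, a ∈ l) : l.length = Fintype.card A := by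
  classical
  have htf : l.toFinset = Finset.univ := by ext a; simp [hall a]
  rw [← List.toFinset_card_of_nodup hnd, htf, Finset.card_univ]

lemma exists_ofFn_eq {α : Type} (n : ℕ) (l : List α) (h : l.length = n) (hnd : l.Nodup) :
    ∃ g : Fin n → α, Function.Injective g ∧ List.ofFn g = l := by
  subst h
  exact ⟨l.get, List.nodup_iff_injective_get.mp hnd, List.ofFn_get l⟩

variable [Fintype A]

/-- complete nodup lists over `A` -/
def CList (A : Type) : Type := {l : List A // l.Nodup ∧ ∀ a, a ∈ l}

def clistOfEquiv (σ : Fin (Fintype.card A) ≃ A) : CList A :=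
  ⟨List.ofFn σ, List.nodup_ofFn.mpr σ.injective,
    fun a => List.mem_ofFn.mpr ⟨σ.symm a, by simp⟩⟩

lemma clistOfEquiv_bijective : Function.Bijective (clistOfEquiv (A := A)) := by
  constructor
  · intro σ τ h
    have : List.ofFn σ = List.ofFn τ := congrArg Subtype.val h
    have := List.ofFn_injective this
    exact Equiv.ext (fun i => congrFun this i)
  · rintro ⟨l, hnd, hall⟩
    have hlen : l.length = Fintype.card A := complete_list_length hnd hall
    obtain ⟨g, hginj, hgofn⟩ := exists_ofFn_eq _ l hlen hnd
    have hgbij : Function.Bijective g :=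
      (Fintype.bijective_iff_injective_and_card g).mpr ⟨hginj, by simp⟩
    refine ⟨Equiv.ofBijective g hgbij, ?_⟩
    exact Subtype.ext hgofn

noncomputable instance : Fintype (CList A) := by
  classical
  exact Fintype.ofBijective _ clistOfEquiv_bijective

lemma card_clist : Nat.card (CList A) = (Fintype.card A).factorial := by
  classical
  rw [← Nat.card_congr (Equiv.ofBijective _ (clistOfEquiv_bijective (A := A)))]
  rw [Nat.card_eq_fintype_card, Fintype.card_equiv (Fintype.equivFin A).symm]
  simp

def ssGlue (x : Σ l : CList A, {f : RegEx A // IsUnionOfLetters f l.1}) :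
    {e : RegEx A // IsSigmaStar e} :=
  ⟨RegEx.star x.2.1, x.2.1, x.1.1, rfl, x.2.2, x.1.2.1, x.1.2.2⟩

lemma ssGlue_bijective : Function.Bijective (ssGlue (A := A)) := by
  constructor
  · rintro ⟨⟨l, hl⟩, ⟨f, hf⟩⟩ ⟨⟨l', hl'⟩, ⟨f', hf'⟩⟩ h
    have hs : RegEx.star f = RegEx.star f' := congrArg Subtype.val h
    injection hs with e1
    subst e1
    have : l = l' := iul_unique hf hf'
    subst this
    rfl
  · rintro ⟨e, he⟩
    obtain ⟨f, l, rfl, hf, hnd, hall⟩ := he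
    exact ⟨⟨⟨l, hnd, hall⟩, ⟨f, hf⟩⟩, rfl⟩

lemma card_sigmaStar [Finite A] (hA : 1 ≤ Fintype.card A) :
    Nat.card {e : RegEx A // IsSigmaStar e}
      = catalan (Fintype.card A - 1) * (Fintype.card A).factorial := by
  rw [← Nat.card_congr (Equiv.ofBijective _ (ssGlue_bijective (A := A))), nat_card_sigma]
  have hfib : ∀ l : CList A,
      Nat.card {f : RegEx A // IsUnionOfLetters f l.1} = catalan (Fintype.card A - 1) := by
    rintro ⟨l, hnd, hall⟩
    have hlen : l.length = Fintype.card A := complete_list_length hnd hall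
    exact card_iul _ l hlen (by intro h0; rw [h0] at hlen; simp at hlen; omega)
  rw [Finset.sum_congr rfl (fun l _ => hfib l), Finset.sum_const, Finset.card_univ,
    smul_eq_mul, ← Nat.card_eq_fintype_card, card_clist]
  ring

instance finA1 (n : ℕ) : Finite {e : RegEx A // Avoids e ∧ e.size = n} :=
  finite_subtype_size _ n (fun _ h => h.2.le)

instance finB1 (n : ℕ) : Finite {e : RegEx A // Avoids e ∧ ¬ IsSigmaStar e ∧ e.size = n} :=
  finite_subtype_size _ n (fun _ h => h.2.2.le)

instance finS1 (n : ℕ) : Finite {e : RegEx A // Avoids e ∧ IsSigmaStar e ∧ e.size = n} :=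
  finite_subtype_size _ n (fun _ h => h.2.2.le)

noncomputable def Acnt (A : Type) [Fintype A] (n : ℕ) : ℕ :=
  Nat.card {e : RegEx A // Avoids e ∧ e.size = n}

noncomputable def Bcnt (A : Type) [Fintype A] (n : ℕ) : ℕ :=
  Nat.card {e : RegEx A // Avoids e ∧ ¬ IsSigmaStar e ∧ e.size = n}

def mainGlue (n : ℕ) :
    ({e : RegEx A // Avoids e ∧ e.size = n + 1}
      ⊕ (Σ p : (Finset.HasAntidiagonal.antidiagonal (n + 1) : Finset (ℕ × ℕ)),
          {e : RegEx A // Avoids e ∧ e.size = p.1.1} ×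
          {e : RegEx A // Avoids e ∧ e.size = p.1.2})
      ⊕ (Σ p : (Finset.HasAntidiagonal.antidiagonal (n + 1) : Finset (ℕ × ℕ)),
          {e : RegEx A // Avoids e ∧ ¬ IsSigmaStar e ∧ e.size = p.1.1} ×
          {e : RegEx A // Avoids e ∧ ¬ IsSigmaStar e ∧ e.size = p.1.2}))
    → {e : RegEx A // Avoids e ∧ e.size = n + 2}
  | Sum.inl y => ⟨RegEx.star y.1, y.2.1, by
      have hs := y.2.2
      simp only [RegEx.size]; omega⟩
  | Sum.inr (Sum.inl y) =>
      ⟨RegEx.cat y.2.1.1 y.2.2.1, ⟨y.2.1.2.1, y.2.2.2.1⟩, by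
        have hm := Finset.HasAntidiagonal.mem_antidiagonal.mp y.1.2
        have hs1 := y.2.1.2.2
        have hs2 := y.2.2.2.2
        simp only [RegEx.size]; omega⟩
  | Sum.inr (Sum.inr y) =>
      ⟨RegEx.plus y.2.1.1 y.2.2.1, ⟨y.2.1.2.1, y.2.2.2.1, y.2.1.2.2.1, y.2.2.2.2.1⟩, by
        have hm := Finset.HasAntidiagonal.mem_antidiagonal.mp y.1.2
        have hs1 := y.2.1.2.2.2
        have hs2 := y.2.2.2.2.2
        simp only [RegEx.size]; omega⟩

lemma mainGlue_injective (n : ℕ) : Function.Injective (mainGlue (A := A) n) := by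
  rintro x y heq
  have hv := congrArg Subtype.val heq
  rcases x with ⟨f, hA, hs⟩ |
      (⟨⟨⟨p1, p2⟩, hp⟩, ⟨⟨f1, h1⟩, ⟨f2, h2⟩⟩⟩ | ⟨⟨⟨p1, p2⟩, hp⟩, ⟨⟨f1, h1⟩, ⟨f2, h2⟩⟩⟩) <;>
    rcases y with ⟨g, gA, gs⟩ |
      (⟨⟨⟨q1, q2⟩, hq⟩, ⟨⟨g1, k1⟩, ⟨g2, k2⟩⟩⟩ | ⟨⟨⟨q1, q2⟩, hq⟩, ⟨⟨g1, k1⟩, ⟨g2, k2⟩⟩⟩) <;>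
    simp only [mainGlue] at hv
  · injection hv with e1; subst e1; rfl
  · injection hv
  · injection hv
  · injection hv
  · injection hv with e1 e2
    subst e1; subst e2
    have hq1 : p1 = q1 := h1.2.symm.trans k1.2
    have hq2 : p2 = q2 := h2.2.symm.trans k2.2
    subst hq1; subst hq2
    rfl
  · injection hv
  · injection hv
  · injection hv
  · injection hv with e1 e2
    subst e1; subst e2
    have hq1 : p1 = q1 := h1.2.2.symm.trans k1.2.2
    have hq2 : p2 = q2 := h2.2.2.symm.trans k2.2.2
    subst hq1; subst hq2
    rfl

lemma mainGlue_surjective (n : ℕ) : Function.Surjective (mainGlue (A := A) n) := by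
  rintro ⟨e, hA, hs⟩
  cases e with
  | eps => simp only [RegEx.size] at hs; omega
  | char a => simp only [RegEx.size] at hs; omega
  | star f =>
    simp only [RegEx.size] at hs
    exact ⟨Sum.inl ⟨f, hA, by omega⟩, rfl⟩
  | cat f1 f2 =>
    simp only [RegEx.size] at hs
    exact ⟨Sum.inr (Sum.inl ⟨⟨(f1.size, f2.size), Finset.HasAntidiagonal.mem_antidiagonal.mpr (by omega)⟩,
      ⟨⟨f1, hA.1, rfl⟩, ⟨f2, hA.2, rfl⟩⟩⟩), rfl⟩
  | plus f1 f2 =>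
    simp only [RegEx.size] at hs
    exact ⟨Sum.inr (Sum.inr ⟨⟨(f1.size, f2.size), Finset.HasAntidiagonal.mem_antidiagonal.mpr (by omega)⟩,
      ⟨⟨f1, hA.1, hA.2.2.1, rfl⟩, ⟨f2, hA.2.1, hA.2.2.2, rfl⟩⟩⟩), rfl⟩

lemma Acnt_rec (n : ℕ) :
    Acnt A (n + 2) = Acnt A (n + 1)
      + (∑ p ∈ Finset.HasAntidiagonal.antidiagonal (n + 1), Acnt A p.1 * Acnt A p.2)
      + (∑ p ∈ Finset.HasAntidiagonal.antidiagonal (n + 1), Bcnt A p.1 * Bcnt A p.2) := by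
  rw [Acnt, ← Nat.card_congr (Equiv.ofBijective _
    ⟨mainGlue_injective (A := A) n, mainGlue_surjective (A := A) n⟩),
    Nat.card_sum, Nat.card_sum, nat_card_sigma, nat_card_sigma]
  have h1 : ∀ p : (Finset.HasAntidiagonal.antidiagonal (n + 1) : Finset (ℕ × ℕ)),
      Nat.card ({e : RegEx A // Avoids e ∧ e.size = (p : ℕ × ℕ).1} ×
        {e : RegEx A // Avoids e ∧ e.size = (p : ℕ × ℕ).2})
      = Acnt A (p : ℕ × ℕ).1 * Acnt A (p : ℕ × ℕ).2 := fun p => Nat.card_prod _ _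
  have h2 : ∀ p : (Finset.HasAntidiagonal.antidiagonal (n + 1) : Finset (ℕ × ℕ)),
      Nat.card ({e : RegEx A // Avoids e ∧ ¬ IsSigmaStar e ∧ e.size = (p : ℕ × ℕ).1} ×
        {e : RegEx A // Avoids e ∧ ¬ IsSigmaStar e ∧ e.size = (p : ℕ × ℕ).2})
      = Bcnt A (p : ℕ × ℕ).1 * Bcnt A (p : ℕ × ℕ).2 := fun p => Nat.card_prod _ _
  rw [Fintype.sum_congr _ _ h1, Fintype.sum_congr _ _ h2,
    Finset.sum_coe_sort (Finset.HasAntidiagonal.antidiagonal (n + 1)) (fun p => Acnt A p.1 * Acnt A p.2),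
    Finset.sum_coe_sort (Finset.HasAntidiagonal.antidiagonal (n + 1)) (fun p => Bcnt A p.1 * Bcnt A p.2)]
  rw [Acnt]
  ring

lemma Acnt_zero : Acnt A 0 = 0 := by
  haveI : IsEmpty {e : RegEx A // Avoids e ∧ e.size = 0} :=
    ⟨fun x => by have := size_pos x.1; have := x.2.2; omega⟩
  rw [Acnt]
  exact Nat.card_of_isEmpty

def oneGlue (A : Type) [Fintype A] :
    Option A → {e : RegEx A // Avoids e ∧ e.size = 1}
  | none => ⟨RegEx.eps, trivial, rfl⟩
  | some a => ⟨RegEx.char a, trivial, rfl⟩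

lemma oneGlue_bijective : Function.Bijective (oneGlue A) := by
  constructor
  · rintro (_ | a) (_ | b) h <;> simp only [oneGlue] at h
    · rfl
    · exact absurd (congrArg Subtype.val h) (by simp)
    · exact absurd (congrArg Subtype.val h) (by simp)
    · have := congrArg Subtype.val h
      simp only at this
      injection this with e
      rw [e]
  · rintro ⟨e, hA, hs⟩
    cases e with
    | eps => exact ⟨none, rfl⟩
    | char a => exact ⟨some a, rfl⟩
    | plus f1 f2 =>
      exfalso; have := size_pos f1; have := size_pos f2
      simp only [RegEx.size] at hs; omega
    | cat f1 f2 =>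
      exfalso; have := size_pos f1; have := size_pos f2
      simp only [RegEx.size] at hs; omega
    | star f =>
      exfalso; have := size_pos f
      simp only [RegEx.size] at hs; omega

lemma Acnt_one : Acnt A 1 = Fintype.card A + 1 := by
  rw [Acnt, ← Nat.card_congr (Equiv.ofBijective _ (oneGlue_bijective (A := A))),
    Nat.card_eq_fintype_card, Fintype.card_option]

noncomputable def SScnt (A : Type) [Fintype A] (n : ℕ) : ℕ :=
  Nat.card {e : RegEx A // Avoids e ∧ IsSigmaStar e ∧ e.size = n}

def partGlue (n : ℕ) :
    ({e : RegEx A // Avoids e ∧ ¬ IsSigmaStar e ∧ e.size = n}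
      ⊕ {e : RegEx A // Avoids e ∧ IsSigmaStar e ∧ e.size = n})
    → {e : RegEx A // Avoids e ∧ e.size = n}
  | Sum.inl y => ⟨y.1, y.2.1, y.2.2.2⟩
  | Sum.inr y => ⟨y.1, y.2.1, y.2.2.2⟩

lemma partGlue_bijective (n : ℕ) : Function.Bijective (partGlue (A := A) n) := by
  constructor
  · rintro (⟨e, h⟩ | ⟨e, h⟩) (⟨e', h'⟩ | ⟨e', h'⟩) heq <;>
      have hv := congrArg Subtype.val heq <;> simp only [partGlue] at hv <;> subst hv
    · rfl
    · exact absurd h'.2.1 h.2.1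
    · exact absurd h.2.1 h'.2.1
    · rfl
  · rintro ⟨e, hA, hs⟩
    by_cases hss : IsSigmaStar e
    · exact ⟨Sum.inr ⟨e, hA, hss, hs⟩, rfl⟩
    · exact ⟨Sum.inl ⟨e, hA, hss, hs⟩, rfl⟩

lemma Acnt_partition (n : ℕ) : Acnt A n = Bcnt A n + SScnt A n := by
  rw [Acnt, ← Nat.card_congr (Equiv.ofBijective _ (partGlue_bijective (A := A) n)),
    Nat.card_sum, Bcnt, SScnt]

lemma SScnt_eq (hA : 1 ≤ Fintype.card A) (n : ℕ) :
    SScnt A n = if n = 2 * Fintype.card A then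
      catalan (Fintype.card A - 1) * (Fintype.card A).factorial else 0 := by
  split_ifs with h
  · subst h
    rw [SScnt, Nat.card_congr (Equiv.subtypeEquivRight (fun e =>
      ⟨fun h => h.2.1, fun h => ⟨sigmaStar_avoids h, h, sigmaStar_size h⟩⟩)),
      card_sigmaStar hA]
  · haveI : IsEmpty {e : RegEx A // Avoids e ∧ IsSigmaStar e ∧ e.size = n} :=
      ⟨fun x => h (by rw [← x.2.2.2, sigmaStar_size x.2.2.1])⟩
    rw [SScnt]
    exact Nat.card_of_isEmpty

end S11


/-- Number of expressions in `REna` (over a `k`-letter alphabet) of size `n`. -/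
noncomputable def Rcount (k n : ℕ) : ℕ :=
  Nat.card {e : RegEx (Fin k) // RegEx.Avoids e ∧ RegEx.size e = n}

/-- `C_k = (2k-2)!/(k-1)!` as a rational number. -/
noncomputable def CcQ (k : ℕ) : ℚ :=
  ((2 * k - 2).factorial : ℚ) / ((k - 1).factorial : ℚ)

/-- The generating function `R_k(z) = Σ_{n≥1} R_n·z^n` of `REna` as a formal power series
over `ℚ` (note `R_0 = 0`). -/
noncomputable def Rseries (k : ℕ) : PowerSeries ℚ :=
  PowerSeries.mk fun n => (Rcount k n : ℚ)

/-- `r_k(z) = 1 − z + 2·C_k·z^{2k+1}` as a formal power series over `ℚ`. -/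
noncomputable def rSeries (k : ℕ) : PowerSeries ℚ :=
  1 - PowerSeries.X + PowerSeries.C (R := ℚ) (2 * CcQ k) * PowerSeries.X ^ (2 * k + 1)

/-- `s_k(z) = 1 + k + C_k²·z^{4k}` as a formal power series over `ℚ`. -/
noncomputable def sSeries (k : ℕ) : PowerSeries ℚ :=
  PowerSeries.C (R := ℚ) (1 + k) + PowerSeries.C (R := ℚ) (CcQ k ^ 2) * PowerSeries.X ^ (4 * k)


noncomputable def aq (k m : ℕ) : ℚ := (S11.Acnt (Fin k) m : ℚ)
noncomputable def bq (k m : ℕ) : ℚ := (S11.Bcnt (Fin k) m : ℚ)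

lemma hCQ_eq (k : ℕ) (hk : 2 ≤ k) :
    CcQ k = ((catalan (k - 1) * k.factorial : ℕ) : ℚ) := by
  have h1 : k * catalan (k - 1) = (k - 1).centralBinom := by
    have := succ_mul_catalan_eq_centralBinom (k - 1)
    rwa [show k - 1 + 1 = k by omega] at this
  have h2 : (2 * k - 2).choose (k - 1) * (k - 1).factorial * (k - 1).factorial
      = (2 * k - 2).factorial := by
    have := Nat.choose_mul_factorial_mul_factorial (n := 2 * k - 2) (k := k - 1) (by omega)
    rwa [show 2 * k - 2 - (k - 1) = k - 1 by omega] at this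
  have hcb : (k - 1).centralBinom = (2 * k - 2).choose (k - 1) := by
    rw [Nat.centralBinom]; congr 1; omega
  have hkf : k.factorial = k * (k - 1).factorial := by
    conv_lhs => rw [show k = (k - 1) + 1 by omega]
    rw [Nat.factorial_succ, show k - 1 + 1 = k by omega]
  have hfac : (2 * k - 2).factorial = (catalan (k - 1) * k.factorial) * (k - 1).factorial := by
    calc (2 * k - 2).factorial
        = (2 * k - 2).choose (k - 1) * (k - 1).factorial * (k - 1).factorial := h2.symm
      _ = (k - 1).centralBinom * (k - 1).factorial * (k - 1).factorial := by rw [hcb]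
      _ = (k * catalan (k - 1)) * (k - 1).factorial * (k - 1).factorial := by rw [h1]
      _ = (catalan (k - 1) * k.factorial) * (k - 1).factorial := by rw [hkf]; ring
  rw [CcQ, hfac]
  have hne : ((k - 1).factorial : ℚ) ≠ 0 := by
    exact_mod_cast Nat.factorial_ne_zero _
  push_cast
  field_simp

lemma feq (k : ℕ) (hk : 2 ≤ k) :
    Rseries k = PowerSeries.C (R := ℚ) ((k : ℚ) + 1) * PowerSeries.X
      + PowerSeries.X * Rseries k
      + PowerSeries.X * (Rseries k) ^ 2
      + PowerSeries.X * (Rseries k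
          - PowerSeries.C (R := ℚ) ((catalan (k - 1) * k.factorial : ℕ) : ℚ)
            * PowerSeries.X ^ (2 * k)) ^ 2 := by
  classical
  have hcard : Fintype.card (Fin k) = k := Fintype.card_fin k
  have hk1 : 1 ≤ Fintype.card (Fin k) := by omega
  have hRA : ∀ n, Rcount k n = S11.Acnt (Fin k) n := fun n => rfl
  have hcoeff : ∀ m, PowerSeries.coeff (R := ℚ) m (Rseries k) = aq k m := by
    intro m; rw [Rseries, PowerSeries.coeff_mk, hRA, aq]
  have hpart : ∀ m, S11.Acnt (Fin k) m
      = S11.Bcnt (Fin k) m + (if m = 2 * k then catalan (k - 1) * k.factorial else 0) := by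
    intro m
    rw [S11.Acnt_partition, S11.SScnt_eq hk1]
    simp [hcard]
  have hb : ∀ m, PowerSeries.coeff (R := ℚ) m (Rseries k
      - PowerSeries.C (R := ℚ) ((catalan (k - 1) * k.factorial : ℕ) : ℚ) * PowerSeries.X ^ (2 * k))
      = bq k m := by
    intro m
    rw [map_sub, hcoeff, PowerSeries.coeff_C_mul_X_pow]
    have hp := hpart m
    have hpq : aq k m = bq k m
        + (if m = 2 * k then ((catalan (k - 1) * k.factorial : ℕ) : ℚ) else 0) := by
      rw [aq, bq, hp]
      push_cast
      split_ifs <;> simp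
    rw [hpq]
    split_ifs <;> ring
  have haq0 : aq k 0 = 0 := by rw [aq, S11.Acnt_zero]; simp
  have haq1 : aq k 1 = (k : ℚ) + 1 := by rw [aq, S11.Acnt_one, hcard]; push_cast; ring
  have hbq0 : bq k 0 = 0 := by
    have hp := hpart 0
    rw [if_neg (by omega)] at hp
    have h0 := S11.Acnt_zero (A := Fin k)
    have : S11.Bcnt (Fin k) 0 = 0 := by omega
    rw [bq, this]; simp
  ext n
  rcases n with _ | n
  · rw [hcoeff 0, haq0]
    simp
  · rw [map_add, map_add, map_add, PowerSeries.coeff_succ_X_mul, PowerSeries.coeff_succ_X_mul,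
      PowerSeries.coeff_succ_X_mul, PowerSeries.coeff_C_mul, PowerSeries.coeff_X,
      sq, sq, PowerSeries.coeff_mul, PowerSeries.coeff_mul]
    simp only [hcoeff, hb]
    rcases n with _ | m
    · rw [if_pos rfl]
      simp only [Finset.Nat.antidiagonal_zero, Finset.sum_singleton]
      rw [haq0, haq1, hbq0]
      ring
    · rw [if_neg (by omega)]
      have hrec := S11.Acnt_rec (A := Fin k) m
      have hq : aq k (m + 2) = aq k (m + 1)
          + (∑ p ∈ Finset.HasAntidiagonal.antidiagonal (m + 1), aq k p.1 * aq k p.2)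
          + (∑ p ∈ Finset.HasAntidiagonal.antidiagonal (m + 1), bq k p.1 * bq k p.2) := by
        have := congrArg (Nat.cast : ℕ → ℚ) hrec
        push_cast at this
        simpa [aq, bq] using this
      rw [hq]
      ring

/-- For every integer `k ≥ 2`, the formal power series
`R_k(z) = Σ_{n≥1} R_n·z^n` satisfies `2z·R_k(z)² − r_k(z)·R_k(z) + z·s_k(z) = 0`. -/
theorem statement11 (k : ℕ) (hk : 2 ≤ k) :
    2 * PowerSeries.X * Rseries k ^ 2 - rSeries k * Rseries k
      + PowerSeries.X * sSeries k = 0 := by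
  classical
  have FEQ := feq k hk
  have hCQ := hCQ_eq k hk
  rw [rSeries, sSeries]
  have c1 : PowerSeries.C (R := ℚ) (2 * CcQ k)
      = 2 * PowerSeries.C (R := ℚ) ((catalan (k - 1) * k.factorial : ℕ) : ℚ) := by
    rw [hCQ, map_mul, map_ofNat]
  have c2 : PowerSeries.C (R := ℚ) (CcQ k ^ 2)
      = (PowerSeries.C (R := ℚ) ((catalan (k - 1) * k.factorial : ℕ) : ℚ)) ^ 2 := by
    rw [hCQ, map_pow]
  have c3 : PowerSeries.C (R := ℚ) (1 + (k : ℚ)) = PowerSeries.C (R := ℚ) ((k : ℚ) + 1) := by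
    rw [add_comm]
  rw [c1, c2, c3]
  have e1 : (PowerSeries.X : PowerSeries ℚ) ^ (2 * k + 1)
      = PowerSeries.X ^ (2 * k) * PowerSeries.X := pow_succ _ _
  have e2 : (PowerSeries.X : PowerSeries ℚ) ^ (4 * k)
      = PowerSeries.X ^ (2 * k) * PowerSeries.X ^ (2 * k) := by
    rw [← pow_add]; congr 1; omega
  rw [e1, e2]
  generalize (PowerSeries.X : PowerSeries ℚ) ^ (2 * k) = Y at FEQ ⊢
  linear_combination -FEQ
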